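/- Let ε ∈ (0,1), let n ≥ 1 be an integer, let g(t) := sin²(t/2)/t² (with g(0) := 1/4), and let M_n(t) := ∫_{−πn}^{πn} |s|^ε g(t − s) ds. Then there is an absolute constant C > 0 such that for every t with |t| < πn/2, the derivative satisfies |M_n'(t)| ≤ C ( n^{ε−2} + ε (1 + |t|)^{ε−1} ). -/

import Mathlib

open MeasureTheory

/-- `g(t) := sin²(t/2)/t²`, extended continuously by `g(0) = 1/4`. -/
noncomputable def gAux (t : ℝ) : ℝ :=
  if t = 0 then 1 / 4 else Real.sin (t / 2) ^ 2 / t ^ 2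

/-- `M_n(t) := ∫_{-πn}^{πn} |s|^ε g(t - s) ds`. -/
noncomputable def MAux (ε : ℝ) (n : ℕ) (t : ℝ) : ℝ :=
  ∫ s in (-(Real.pi * n))..(Real.pi * n), |s| ^ ε * gAux (t - s)

namespace MAuxProof

open Real Set intervalIntegral

noncomputable def gd (u : ℝ) : ℝ :=
  if u = 0 then 0 else (u * Real.sin u - 2 * (1 - Real.cos u)) / (2 * u ^ 3)

lemma nonneg_of_hasDerivAt (f f' : ℝ → ℝ) (hd : ∀ x, HasDerivAt f (f' x) x)
    (h0 : f 0 = 0) (h : ∀ x, 0 ≤ x → 0 ≤ f' x) {x : ℝ} (hx : 0 ≤ x) : 0 ≤ f x := by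
  have hm : MonotoneOn f (Set.Ici (0:ℝ)) := by
    refine monotoneOn_of_deriv_nonneg (convex_Ici 0)
      (fun y _ => (hd y).continuousAt.continuousWithinAt)
      (fun y _ => (hd y).differentiableAt.differentiableWithinAt) ?_
    intro y hy
    rw [(hd y).deriv]
    rw [interior_Ici] at hy
    exact h y hy.le
  have h2 := hm Set.self_mem_Ici (Set.mem_Ici.2 hx) hx
  linarith [h0 ▸ h2]

lemma sin_le_self {u : ℝ} (hu : 0 ≤ u) : Real.sin u ≤ u := by
  have h := Real.abs_sin_le_abs (x := u)
  rw [abs_of_nonneg hu] at h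
  exact (abs_le.1 h).2

/-- `1 - cos u ≤ u²/2` for `u ≥ 0`. -/
lemma cosA {u : ℝ} (hu : 0 ≤ u) : 0 ≤ u ^ 2 / 2 - 1 + Real.cos u := by
  refine nonneg_of_hasDerivAt (fun y => y ^ 2 / 2 - 1 + Real.cos y)
    (fun y => y - Real.sin y) (fun y => ?_) (by norm_num) (fun y hy => ?_) hu
  · have h := (((hasDerivAt_pow 2 y).div_const 2).sub_const 1).add (Real.hasDerivAt_cos y)
    refine h.congr_deriv ?_
    push_cast; ring
  · have := sin_le_self hy; linarith

/-- `u - u³/6 ≤ sin u` for `u ≥ 0`. -/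
lemma sinB {u : ℝ} (hu : 0 ≤ u) : 0 ≤ u ^ 3 / 6 - u + Real.sin u := by
  refine nonneg_of_hasDerivAt (fun y => y ^ 3 / 6 - y + Real.sin y)
    (fun y => y ^ 2 / 2 - 1 + Real.cos y) (fun y => ?_) (by norm_num) (fun y hy => cosA hy) hu
  have h := (((hasDerivAt_pow 3 y).div_const 6).sub (hasDerivAt_id' y)).add (Real.hasDerivAt_sin y)
  refine h.congr_deriv ?_
  push_cast; ring

/-- `u²/2 - (1 - cos u) ≤ u⁴/24` for `u ≥ 0`. -/
lemma cosC {u : ℝ} (hu : 0 ≤ u) : 0 ≤ u ^ 4 / 24 - u ^ 2 / 2 + 1 - Real.cos u := by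
  refine nonneg_of_hasDerivAt (fun y => y ^ 4 / 24 - y ^ 2 / 2 + 1 - Real.cos y)
    (fun y => y ^ 3 / 6 - y + Real.sin y) (fun y => ?_) (by norm_num) (fun y hy => sinB hy) hu
  have h := ((((hasDerivAt_pow 4 y).div_const 24).sub
    ((hasDerivAt_pow 2 y).div_const 2)).add_const 1).sub (Real.hasDerivAt_cos y)
  refine h.congr_deriv ?_
  push_cast; ring

/-- `|u² - 2(1 - cos u)| ≤ u⁴/12` for all `u`. -/
lemma abs_cos4 (u : ℝ) : |u ^ 2 - 2 * (1 - Real.cos u)| ≤ u ^ 4 / 12 := by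
  have key : ∀ v : ℝ, 0 ≤ v → |v ^ 2 - 2 * (1 - Real.cos v)| ≤ v ^ 4 / 12 := by
    intro v hv
    have h1 := cosA hv
    have h2 := cosC hv
    rw [abs_le]; constructor <;> nlinarith
  rcases le_total 0 u with hu | hu
  · exact key u hu
  · have h := key (-u) (by linarith)
    have e1 : (-u) ^ 2 = u ^ 2 := by ring
    have e2 : (-u) ^ 4 = u ^ 4 := by ring
    rw [e1, e2, Real.cos_neg] at h
    exact h

lemma hasDerivAt_h1 (y : ℝ) :
    HasDerivAt (fun u => u * Real.cos u - Real.sin u) (-(y * Real.sin y)) y := by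
  have h := ((hasDerivAt_id' y).mul (Real.hasDerivAt_cos y)).sub (Real.hasDerivAt_sin y)
  refine h.congr_deriv ?_
  ring

/-- `|u cos u - sin u| ≤ |u|³/3`. -/
lemma abs_h1 (u : ℝ) : |u * Real.cos u - Real.sin u| ≤ |u| ^ 3 / 3 := by
  have habs : ∀ y : ℝ, 0 ≤ y → |y * Real.sin y| ≤ y ^ 2 := by
    intro y hy
    rw [abs_mul, abs_of_nonneg hy]
    have h := Real.abs_sin_le_abs (x := y)
    rw [abs_of_nonneg hy] at h
    nlinarith [abs_nonneg (Real.sin y)]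
  have key : ∀ v : ℝ, 0 ≤ v → |v * Real.cos v - Real.sin v| ≤ v ^ 3 / 3 := by
    intro v hv
    have hupper : 0 ≤ v ^ 3 / 3 - (v * Real.cos v - Real.sin v) := by
      refine nonneg_of_hasDerivAt (fun y => y ^ 3 / 3 - (y * Real.cos y - Real.sin y))
        (fun y => y ^ 2 - -(y * Real.sin y)) (fun y => ?_) (by norm_num) (fun y hy => ?_) hv
      · have h := ((hasDerivAt_pow 3 y).div_const 3).sub (hasDerivAt_h1 y)
        refine h.congr_deriv ?_
        push_cast; ring
      · have := habs y hy; rw [abs_le] at this; linarith [this.1]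
    have hlower : 0 ≤ v ^ 3 / 3 + (v * Real.cos v - Real.sin v) := by
      refine nonneg_of_hasDerivAt (fun y => y ^ 3 / 3 + (y * Real.cos y - Real.sin y))
        (fun y => y ^ 2 + -(y * Real.sin y)) (fun y => ?_) (by norm_num) (fun y hy => ?_) hv
      · have h := ((hasDerivAt_pow 3 y).div_const 3).add (hasDerivAt_h1 y)
        refine h.congr_deriv ?_
        push_cast; ring
      · have := habs y hy; rw [abs_le] at this; linarith [this.2]
    rw [abs_le]; constructor <;> linarith
  rcases le_total 0 u with hu | hu
  · rw [abs_of_nonneg hu]; exact key u hu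
  · have h := key (-u) (by linarith)
    rw [abs_of_nonpos hu]
    have e : (-u) * Real.cos (-u) - Real.sin (-u) = -(u * Real.cos u - Real.sin u) := by
      rw [Real.cos_neg, Real.sin_neg]; ring
    rw [e, abs_neg] at h
    exact h

lemma hasDerivAt_h (y : ℝ) :
    HasDerivAt (fun u => u * Real.sin u - 2 * (1 - Real.cos u))
      (y * Real.cos y - Real.sin y) y := by
  have h := ((hasDerivAt_id' y).mul (Real.hasDerivAt_sin y)).sub
    (((hasDerivAt_const y (1:ℝ)).sub (Real.hasDerivAt_cos y)).const_mul 2)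
  refine h.congr_deriv ?_
  ring

/-- `|u sin u - 2(1-cos u)| ≤ u⁴/12`. -/
lemma abs_h (u : ℝ) : |u * Real.sin u - 2 * (1 - Real.cos u)| ≤ u ^ 4 / 12 := by
  have key : ∀ v : ℝ, 0 ≤ v → |v * Real.sin v - 2 * (1 - Real.cos v)| ≤ v ^ 4 / 12 := by
    intro v hv
    have hupper : 0 ≤ v ^ 4 / 12 - (v * Real.sin v - 2 * (1 - Real.cos v)) := by
      refine nonneg_of_hasDerivAt
        (fun y => y ^ 4 / 12 - (y * Real.sin y - 2 * (1 - Real.cos y)))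
        (fun y => y ^ 3 / 3 - (y * Real.cos y - Real.sin y)) (fun y => ?_) (by norm_num)
        (fun y hy => ?_) hv
      · have h := ((hasDerivAt_pow 4 y).div_const 12).sub (hasDerivAt_h y)
        refine h.congr_deriv ?_
        push_cast; ring
      · have h1 := abs_h1 y
        rw [abs_of_nonneg hy, abs_le] at h1
        linarith [h1.2]
    have hlower : 0 ≤ v ^ 4 / 12 + (v * Real.sin v - 2 * (1 - Real.cos v)) := by
      refine nonneg_of_hasDerivAt
        (fun y => y ^ 4 / 12 + (y * Real.sin y - 2 * (1 - Real.cos y)))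
        (fun y => y ^ 3 / 3 + (y * Real.cos y - Real.sin y)) (fun y => ?_) (by norm_num)
        (fun y hy => ?_) hv
      · have h := ((hasDerivAt_pow 4 y).div_const 12).add (hasDerivAt_h y)
        refine h.congr_deriv ?_
        push_cast; ring
      · have h1 := abs_h1 y
        rw [abs_of_nonneg hy, abs_le] at h1
        linarith [h1.1]
    rw [abs_le]; constructor <;> linarith
  rcases le_total 0 u with hu | hu
  · exact key u hu
  · have h := key (-u) (by linarith)
    have e : (-u) * Real.sin (-u) - 2 * (1 - Real.cos (-u))
        = u * Real.sin u - 2 * (1 - Real.cos u) := by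
      rw [Real.sin_neg, Real.cos_neg]; ring
    have e2 : (-u) ^ 4 = u ^ 4 := by ring
    rw [e, e2] at h
    exact h

/-- `|gd u| ≤ |u|/24`. -/
lemma gd_abs_le (u : ℝ) : |gd u| ≤ |u| / 24 := by
  unfold gd
  rcases eq_or_ne u 0 with h | h
  · simp [h]
  · rw [if_neg h, abs_div]
    have hu3 : |2 * u ^ 3| = 2 * |u| ^ 3 := by
      rw [abs_mul, abs_pow]; norm_num
    rw [hu3]
    have hpos : 0 < 2 * |u| ^ 3 := by
      have : 0 < |u| := abs_pos.2 h
      positivity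
    rw [div_le_div_iff₀ hpos (by norm_num : (0:ℝ) < 24)]
    have h1 := abs_h u
    have h4 : u ^ 4 = |u| ^ 4 := by
      rw [← abs_pow]; rw [abs_of_nonneg (by positivity)]
    nlinarith [abs_nonneg (u * Real.sin u - 2 * (1 - Real.cos u))]

/-- `|gd u| ≤ 3/u²` for `u ≠ 0`. -/
lemma gd_abs_le_sq (u : ℝ) (hu : u ≠ 0) : |gd u| ≤ 3 / u ^ 2 := by
  have hu2 : (0:ℝ) < u ^ 2 := by positivity
  have habs : 0 < |u| := abs_pos.2 hu
  rcases le_or_gt |u| 4 with h4 | h4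
  · refine (gd_abs_le u).trans ?_
    rw [div_le_div_iff₀ (by norm_num : (0:ℝ) < 24) hu2]
    have hsq : u ^ 2 = |u| ^ 2 := (sq_abs u).symm
    nlinarith
  · unfold gd
    rw [if_neg hu, abs_div]
    have hu3 : |2 * u ^ 3| = 2 * |u| ^ 3 := by
      rw [abs_mul, abs_pow]; norm_num
    rw [hu3]
    have hpos : 0 < 2 * |u| ^ 3 := by positivity
    rw [div_le_div_iff₀ hpos hu2]
    have hnum : |u * Real.sin u - 2 * (1 - Real.cos u)| ≤ |u| + 4 := by
      have h1 : |u * Real.sin u| ≤ |u| := by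
        rw [abs_mul]
        nlinarith [Real.abs_sin_le_one u, abs_nonneg u, abs_nonneg (Real.sin u)]
      have h2 : |2 * (1 - Real.cos u)| ≤ 4 := by
        have hc1 := Real.cos_le_one u
        have hc2 := Real.neg_one_le_cos u
        rw [abs_mul, abs_of_nonneg (by norm_num : (0:ℝ) ≤ 2),
          abs_of_nonneg (by linarith : (0:ℝ) ≤ 1 - Real.cos u)]
        linarith
      calc |u * Real.sin u - 2 * (1 - Real.cos u)|
          ≤ |u * Real.sin u| + |2 * (1 - Real.cos u)| := abs_sub _ _
        _ ≤ |u| + 4 := by linarith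
    have hsq : u ^ 2 = |u| ^ 2 := (sq_abs u).symm
    nlinarith

/-- `|gd u| ≤ 1`. -/
lemma gd_abs_le_one (u : ℝ) : |gd u| ≤ 1 := by
  rcases le_or_gt |u| 4 with h4 | h4
  · refine (gd_abs_le u).trans (by linarith)
  · have hu : u ≠ 0 := by
      intro h; rw [h] at h4; simp at h4; linarith
    refine (gd_abs_le_sq u hu).trans ?_
    have h16 : (16:ℝ) < u ^ 2 := by nlinarith [sq_abs u]
    rw [div_le_one (by linarith)]
    linarith

lemma gAux_zero : gAux 0 = 1 / 4 := by simp [gAux]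

lemma gAux_eq {u : ℝ} (hu : u ≠ 0) : gAux u = (1 - Real.cos u) / (2 * u ^ 2) := by
  unfold gAux
  rw [if_neg hu]
  have h : Real.sin (u / 2) ^ 2 = 1 / 2 - Real.cos (2 * (u / 2)) / 2 := Real.sin_sq_eq_half_sub _
  rw [show (2 : ℝ) * (u / 2) = u by ring] at h
  rw [h]
  field_simp

lemma gAux_even (u : ℝ) : gAux (-u) = gAux u := by
  unfold gAux
  rcases eq_or_ne u 0 with h | h
  · simp [h]
  · rw [if_neg h, if_neg (neg_ne_zero.2 h)]
    rw [show -u / 2 = -(u / 2) by ring, Real.sin_neg]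
    rw [show (-u) ^ 2 = u ^ 2 by ring,
      show (-Real.sin (u/2)) ^ 2 = Real.sin (u/2) ^ 2 by ring]

lemma gAux_nonneg (u : ℝ) : 0 ≤ gAux u := by
  unfold gAux
  rcases eq_or_ne u 0 with h | h
  · rw [if_pos h]; norm_num
  · rw [if_neg h]; positivity

lemma gAux_le_quarter (u : ℝ) : gAux u ≤ 1 / 4 := by
  rcases eq_or_ne u 0 with h | h
  · rw [h, gAux_zero]
  · rw [gAux_eq h]
    have h1 := cosA (abs_nonneg u)
    rw [Real.cos_abs, sq_abs] at h1
    have h2 : (0:ℝ) < u ^ 2 := by positivity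
    rw [div_le_div_iff₀ (by positivity) (by norm_num : (0:ℝ) < 4)]
    nlinarith

lemma gAux_le_inv_sq (u : ℝ) (hu : u ≠ 0) : gAux u ≤ 1 / u ^ 2 := by
  rw [gAux_eq hu]
  have h2 : (0:ℝ) < u ^ 2 := by positivity
  rw [div_le_div_iff₀ (by positivity) h2]
  have := Real.neg_one_le_cos u
  nlinarith

lemma hasDerivAt_gAux (u : ℝ) : HasDerivAt gAux (gd u) u := by
  rcases eq_or_ne u 0 with h | h
  · subst h
    have hgd0 : gd 0 = 0 := by simp [gd]
    rw [hgd0, hasDerivAt_iff_tendsto_slope]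
    have hb : ∀ᶠ v in nhdsWithin (0:ℝ) {(0:ℝ)}ᶜ, ‖slope gAux 0 v‖ ≤ |v| / 48 := by
      filter_upwards [self_mem_nhdsWithin] with v hv
      have hv0 : v ≠ 0 := hv
      have habsv : 0 < |v| := abs_pos.2 hv0
      have e : gAux v - 1/4 = -((v^2 - 2*(1 - Real.cos v)) / (4 * v^2)) := by
        rw [gAux_eq hv0]
        field_simp
        ring
      have habs : |gAux v - 1/4| ≤ v^2/48 := by
        rw [e, abs_neg, abs_div,
          abs_of_nonneg (show (0:ℝ) ≤ 4 * v^2 by positivity),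
          div_le_div_iff₀ (by positivity) (by norm_num : (0:ℝ) < 48)]
        nlinarith [abs_cos4 v, abs_nonneg (v^2 - 2*(1-Real.cos v))]
      have es : slope gAux 0 v = (gAux v - 1/4)/v := by
        rw [slope_def_field, gAux_zero, sub_zero]
      rw [Real.norm_eq_abs, es, abs_div]
      rw [div_le_div_iff₀ habsv (by norm_num : (0:ℝ) < 48)]
      have hv2 : v ^ 2 = |v| ^ 2 := (sq_abs v).symm
      nlinarith [abs_nonneg (gAux v - 1/4)]
    refine squeeze_zero_norm' hb ?_
    have ht : Filter.Tendsto (fun v : ℝ => |v|/48) (nhds 0) (nhds 0) := by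
      have := (continuous_abs.div_const (48:ℝ)).tendsto (0:ℝ)
      simpa using this
    exact ht.mono_left nhdsWithin_le_nhds
  · have hform : HasDerivAt (fun v => (1 - Real.cos v) / (2 * v ^ 2))
        (gd u) u := by
      have hden : (2 * u ^ 2) ≠ 0 := by positivity
      have hnum : HasDerivAt (fun v : ℝ => 1 - Real.cos v) (Real.sin u) u := by
        have h2 := (hasDerivAt_const u (1:ℝ)).sub (Real.hasDerivAt_cos u)
        exact h2.congr_deriv (by ring)
      have hden' : HasDerivAt (fun v : ℝ => 2 * v ^ 2) (2 * (2 * u)) u := by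
        have h2 := (hasDerivAt_pow 2 u).const_mul (2:ℝ)
        refine h2.congr_deriv ?_
        push_cast; ring
      have hdiv := hnum.div hden' hden
      refine hdiv.congr_deriv ?_
      unfold gd
      rw [if_neg h]
      field_simp
    refine hform.congr_of_eventuallyEq ?_
    filter_upwards [eventually_ne_nhds h] with v hv
    exact gAux_eq hv

lemma differentiable_gAux : Differentiable ℝ gAux :=
  fun u => (hasDerivAt_gAux u).differentiableAt

lemma continuous_gAux : Continuous gAux := differentiable_gAux.continuous

lemma continuous_gd : Continuous gd := by
  rw [continuous_iff_continuousAt]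
  intro u
  rcases eq_or_ne u 0 with h | h
  · subst h
    have hgd0 : gd 0 = 0 := by simp [gd]
    unfold ContinuousAt
    rw [hgd0]
    refine squeeze_zero_norm (a := fun v => |v|/24) (fun v => ?_) ?_
    · rw [Real.norm_eq_abs]
      exact (gd_abs_le v).trans (le_refl _)
    · have := (continuous_abs.div_const (24:ℝ)).tendsto (0:ℝ)
      simpa using this
  · have hcont : ContinuousAt
        (fun v : ℝ => (v * Real.sin v - 2 * (1 - Real.cos v)) / (2 * v ^ 3)) u := by
      apply ContinuousAt.div
      · fun_prop
      · fun_prop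
      · positivity
    refine hcont.congr ?_
    filter_upwards [eventually_ne_nhds h] with v hv
    unfold gd
    rw [if_neg hv]

lemma abs_gAux_sub_le {b c K : ℝ} (hK : ∀ u ∈ Set.uIcc b c, |gd u| ≤ K) :
    |gAux b - gAux c| ≤ K * |b - c| := by
  have h := (convex_uIcc b c).norm_image_sub_le_of_norm_hasDerivWithin_le
    (f := gAux) (f' := gd)
    (fun u _ => (hasDerivAt_gAux u).hasDerivWithinAt)
    (fun u hu => by rw [Real.norm_eq_abs]; exact hK u hu)
    Set.right_mem_uIcc Set.left_mem_uIcc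
  simpa [Real.norm_eq_abs] using h

/-- Region 1 bound: `s ≤ x/2`. -/
lemma D1 {x s : ℝ} (hx : 0 ≤ x) (hs : 0 ≤ s) (hs2 : s ≤ x / 2) :
    |gAux (x - s) - gAux (x + s)| ≤ 96 * s / (1 + x) ^ 2 := by
  have hx1 : (0:ℝ) < 1 + x := by linarith
  have hK : ∀ u ∈ Set.uIcc (x - s) (x + s), |gd u| ≤ 48 / (1 + x) ^ 2 := by
    intro u hu
    rw [Set.uIcc_of_le (by linarith)] at hu
    obtain ⟨hu1, hu2⟩ := hu
    rcases le_or_gt x 2 with hx2 | hx2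
    · refine (gd_abs_le_one u).trans ?_
      rw [le_div_iff₀ (by positivity)]
      nlinarith
    · have hupos : 0 < u := by linarith
      refine (gd_abs_le_sq u hupos.ne').trans ?_
      rw [div_le_div_iff₀ (by positivity) (by positivity)]
      nlinarith
  have h := abs_gAux_sub_le hK
  rw [show |(x - s) - (x + s)| = 2 * s by
    rw [abs_of_nonpos (by linarith)]; ring] at h
  calc |gAux (x - s) - gAux (x + s)| ≤ 48 / (1 + x) ^ 2 * (2 * s) := h
    _ = 96 * s / (1 + x) ^ 2 := by ring

/-- Small-`x` bound on the middle region: `s ≤ 2x`. -/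
lemma D2' {x s : ℝ} (hx : 0 ≤ x) (hs : 0 ≤ s) (hs2 : s ≤ 2 * x) :
    |gAux (x - s) - gAux (x + s)| ≤ x * s / 4 := by
  have hK : ∀ u ∈ Set.uIcc (x - s) (x + s), |gd u| ≤ x / 8 := by
    intro u hu
    rw [Set.uIcc_of_le (by linarith)] at hu
    obtain ⟨hu1, hu2⟩ := hu
    refine (gd_abs_le u).trans ?_
    have habs : |u| ≤ 3 * x := by
      rw [abs_le]; constructor <;> linarith
    linarith
  have h := abs_gAux_sub_le hK
  rw [show |(x - s) - (x + s)| = 2 * s by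
    rw [abs_of_nonpos (by linarith)]; ring] at h
  calc |gAux (x - s) - gAux (x + s)| ≤ x / 8 * (2 * s) := h
    _ = x * s / 4 := by ring

/-- Region 3 bound: `2x ≤ s`. -/
lemma D2 {x s : ℝ} (hx : 0 ≤ x) (hs : 2 * x ≤ s) :
    |gAux (x - s) - gAux (x + s)| ≤ 24 * x * min s (s ^ 2)⁻¹ := by
  have hs0 : 0 ≤ s := by linarith
  have e : gAux (x - s) = gAux (s - x) := by
    rw [show x - s = -(s - x) by ring, gAux_even]
  have e2 : gAux (x + s) = gAux (s + x) := by rw [add_comm]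
  rw [e, e2]
  have hK : ∀ u ∈ Set.uIcc (s - x) (s + x), |gd u| ≤ 12 * min s (s ^ 2)⁻¹ := by
    intro u hu
    rw [Set.uIcc_of_le (by linarith)] at hu
    obtain ⟨hu1, hu2⟩ := hu
    rcases eq_or_lt_of_le hs0 with hseq | hspos
    · have hx0 : x = 0 := by linarith
      have hu0 : u = 0 := by rw [hx0, ← hseq] at hu1 hu2; linarith
      rw [hu0]
      simp [gd, ← hseq]
    · have hu0 : 0 < u := by linarith
      rcases le_total s (s ^ 2)⁻¹ with hm | hm
      · rw [min_eq_left hm]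
        refine (gd_abs_le u).trans ?_
        rw [abs_of_nonneg hu0.le]
        nlinarith
      · rw [min_eq_right hm]
        refine (gd_abs_le_sq u hu0.ne').trans ?_
        have hs2 : (0:ℝ) < s ^ 2 := by positivity
        rw [div_le_iff₀ (by positivity : (0:ℝ) < u ^ 2)]
        have e3 : 12 * (s ^ 2)⁻¹ * u ^ 2 = 12 * (u ^ 2 / s ^ 2) := by ring
        rw [e3]
        have e4 : 1 / 4 ≤ u ^ 2 / s ^ 2 := by
          rw [div_le_div_iff₀ (by norm_num : (0:ℝ) < 4) hs2]
          nlinarith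
        linarith
  have h := abs_gAux_sub_le hK
  rw [show |(s - x) - (s + x)| = 2 * x by
    rw [abs_of_nonpos (by linarith)]; ring] at h
  calc |gAux (s - x) - gAux (s + x)| ≤ 12 * min s (s ^ 2)⁻¹ * (2 * x) := h
    _ = 24 * x * min s (s ^ 2)⁻¹ := by ring

/-- Middle region crude bound. -/
lemma D3 {x s : ℝ} (hx : 0 ≤ x) (hs : 0 ≤ s) :
    |gAux (x - s) - gAux (x + s)| ≤ 4 / (1 + (s - x) ^ 2) := by
  have hd : (0:ℝ) < 1 + (s - x) ^ 2 := by positivity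
  have key : ∀ v : ℝ, (s - x) ^ 2 ≤ v ^ 2 → gAux v ≤ 2 / (1 + (s - x) ^ 2) := by
    intro v hv
    rcases le_or_gt ((s - x) ^ 2) 7 with h7 | h7
    · refine (gAux_le_quarter v).trans ?_
      rw [div_le_div_iff₀ (by norm_num) hd]
      linarith
    · have hvne : v ≠ 0 := by
        intro h0
        rw [h0] at hv
        nlinarith
      refine (gAux_le_inv_sq v hvne).trans ?_
      have hv2 : (0:ℝ) < v ^ 2 := by positivity
      rw [div_le_div_iff₀ hv2 hd]
      nlinarith
  have h1 : gAux (x - s) ≤ 2 / (1 + (s - x) ^ 2) := by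
    refine key (x - s) ?_
    nlinarith
  have h2 : gAux (x + s) ≤ 2 / (1 + (s - x) ^ 2) := by
    refine key (x + s) ?_
    nlinarith
  have hn1 := gAux_nonneg (x - s)
  have hn2 := gAux_nonneg (x + s)
  have hdd : 0 ≤ 2 / (1 + (s - x) ^ 2) := by positivity
  have h4 : 4 / (1 + (s - x) ^ 2) = 2 * (2 / (1 + (s - x) ^ 2)) := by ring
  rw [abs_le, h4]
  constructor <;> linarith

/-- Reduce to `x = |t|`. -/
lemma abs_D_eq (t s : ℝ) :
    |gAux (t - s) - gAux (t + s)| = |gAux (|t| - s) - gAux (|t| + s)| := by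
  rcases le_or_gt 0 t with h | h
  · rw [abs_of_nonneg h]
  · rw [abs_of_neg h]
    have e1 : gAux (t - s) = gAux (-t + s) := by
      rw [show t - s = -(-t + s) by ring, gAux_even]
    have e2 : gAux (t + s) = gAux (-t - s) := by
      rw [show t + s = -(-t - s) by ring, gAux_even]
    rw [e1, e2, abs_sub_comm]

lemma continuous_comp_sub (t : ℝ) {h : ℝ → ℝ} (hh : Continuous h) :
    Continuous fun s : ℝ => h (t - s) :=
  hh.comp (continuous_const.sub continuous_id)

lemma continuous_comp_add (t : ℝ) {h : ℝ → ℝ} (hh : Continuous h) :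
    Continuous fun s : ℝ => h (t + s) :=
  hh.comp (continuous_const.add continuous_id)

lemma hasDerivAt_MAux {ε : ℝ} (hε : 0 < ε) (n : ℕ) (t : ℝ) :
    HasDerivAt (MAux ε n)
      (∫ s in (-(Real.pi * n))..(Real.pi * n), |s| ^ ε * gd (t - s)) t := by
  have habs : Continuous fun s : ℝ => |s| ^ ε :=
    continuous_abs.rpow_const (fun s => Or.inr hε.le)
  have hF : ∀ x : ℝ, Continuous fun s : ℝ => |s| ^ ε * gAux (x - s) := fun x =>
    habs.mul (continuous_comp_sub x continuous_gAux)
  have hF' : ∀ x : ℝ, Continuous fun s : ℝ => |s| ^ ε * gd (x - s) := fun x =>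
    habs.mul (continuous_comp_sub x continuous_gd)
  have key := intervalIntegral.hasDerivAt_integral_of_dominated_loc_of_deriv_le
    (F := fun x s => |s| ^ ε * gAux (x - s)) (F' := fun x s => |s| ^ ε * gd (x - s))
    (x₀ := t) (a := -(Real.pi * n)) (b := Real.pi * n) (bound := fun s => |s| ^ ε)
    (μ := volume) Filter.univ_mem
    (Filter.Eventually.of_forall fun x => (hF x).aestronglyMeasurable)
    ((hF t).intervalIntegrable _ _)
    ((hF' t).aestronglyMeasurable)
    (Filter.Eventually.of_forall fun s _ => fun x _ => by
      rw [Real.norm_eq_abs, abs_mul,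
        abs_of_nonneg (Real.rpow_nonneg (abs_nonneg s) ε)]
      calc |s| ^ ε * |gd (x - s)| ≤ |s| ^ ε * 1 := by
            exact mul_le_mul_of_nonneg_left (gd_abs_le_one _)
              (Real.rpow_nonneg (abs_nonneg s) ε)
        _ = |s| ^ ε := mul_one _)
    (habs.intervalIntegrable _ _)
    (Filter.Eventually.of_forall fun s _ => fun x _ => by
      have h1 : HasDerivAt (fun y : ℝ => gAux (y - s)) (gd (x - s)) x := by
        have h2 := (hasDerivAt_gAux (x - s)).comp x ((hasDerivAt_id x).sub_const s)
        exact h2.congr_deriv (by ring)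
      exact h1.const_mul _)
  exact key.2

lemma II_aux1 {ε : ℝ} (hε : 0 < ε) {h : ℝ → ℝ} (hh : Continuous h) (c d : ℝ) :
    IntervalIntegrable (fun s => ε * s ^ (ε - 1) * h s) volume c d := by
  have h1 : IntervalIntegrable (fun s : ℝ => ε * s ^ (ε - 1)) volume c d :=
    (intervalIntegral.intervalIntegrable_rpow' (by linarith)).const_mul ε
  exact h1.mul_continuousOn hh.continuousOn

lemma ibp_neg {ε : ℝ} (hε : 0 < ε) {a : ℝ} (ha : 0 ≤ a) (t : ℝ) :
    ∫ s in (0:ℝ)..a, s ^ ε * gd (t - s)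
      = (∫ s in (0:ℝ)..a, ε * s ^ (ε - 1) * gAux (t - s)) - a ^ ε * gAux (t - a) := by
  have hcont : ContinuousOn (fun s : ℝ => s ^ ε * gAux (t - s)) (Set.Icc 0 a) :=
    ((Real.continuous_rpow_const hε.le).mul
      (continuous_comp_sub t continuous_gAux)).continuousOn
  have hderiv : ∀ s ∈ Set.Ioo (0:ℝ) a,
      HasDerivWithinAt (fun s : ℝ => s ^ ε * gAux (t - s))
        (ε * s ^ (ε - 1) * gAux (t - s) - s ^ ε * gd (t - s)) (Set.Ioi s) s := by
    intro s hs
    have h1 : HasDerivAt (fun v : ℝ => v ^ ε) (ε * s ^ (ε - 1)) s :=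
      Real.hasDerivAt_rpow_const (Or.inl hs.1.ne')
    have h2 : HasDerivAt (fun v : ℝ => gAux (t - v)) (-gd (t - s)) s := by
      have h3 := (hasDerivAt_gAux (t - s)).comp s ((hasDerivAt_const s t).sub (hasDerivAt_id s))
      exact h3.congr_deriv (by ring)
    have e : ε * s ^ (ε - 1) * gAux (t - s) - s ^ ε * gd (t - s)
        = ε * s ^ (ε - 1) * gAux (t - s) + s ^ ε * -gd (t - s) := by ring
    rw [e]
    exact (h1.mul h2).hasDerivWithinAt
  have hint : IntervalIntegrable
      (fun s => ε * s ^ (ε - 1) * gAux (t - s) - s ^ ε * gd (t - s)) volume 0 a := by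
    refine (II_aux1 hε (continuous_comp_sub t continuous_gAux) 0 a).sub ?_
    exact ((Real.continuous_rpow_const hε.le).mul
      (continuous_comp_sub t continuous_gd)).intervalIntegrable _ _
  have h := intervalIntegral.integral_eq_sub_of_hasDeriv_right_of_le ha hcont hderiv hint
  have hsub := intervalIntegral.integral_sub
    (II_aux1 hε (continuous_comp_sub t continuous_gAux) 0 a)
    (((Real.continuous_rpow_const hε.le).mul
      (continuous_comp_sub t continuous_gd)).intervalIntegrable 0 a)
  simp only [Pi.mul_apply] at hsub; rw [hsub] at h
  rw [Real.zero_rpow hε.ne'] at h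
  simp only [zero_mul, sub_zero] at h
  linarith [h]

lemma ibp_pos {ε : ℝ} (hε : 0 < ε) {a : ℝ} (ha : 0 ≤ a) (t : ℝ) :
    ∫ s in (0:ℝ)..a, s ^ ε * gd (t + s)
      = a ^ ε * gAux (t + a) - ∫ s in (0:ℝ)..a, ε * s ^ (ε - 1) * gAux (t + s) := by
  have hcont : ContinuousOn (fun s : ℝ => s ^ ε * gAux (t + s)) (Set.Icc 0 a) :=
    ((Real.continuous_rpow_const hε.le).mul
      (continuous_comp_add t continuous_gAux)).continuousOn
  have hderiv : ∀ s ∈ Set.Ioo (0:ℝ) a,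
      HasDerivWithinAt (fun s : ℝ => s ^ ε * gAux (t + s))
        (ε * s ^ (ε - 1) * gAux (t + s) + s ^ ε * gd (t + s)) (Set.Ioi s) s := by
    intro s hs
    have h1 : HasDerivAt (fun v : ℝ => v ^ ε) (ε * s ^ (ε - 1)) s :=
      Real.hasDerivAt_rpow_const (Or.inl hs.1.ne')
    have h2 : HasDerivAt (fun v : ℝ => gAux (t + v)) (gd (t + s)) s := by
      have h3 := (hasDerivAt_gAux (t + s)).comp s ((hasDerivAt_id s).const_add t)
      exact h3.congr_deriv (by ring)
    exact (h1.mul h2).hasDerivWithinAt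
  have hint : IntervalIntegrable
      (fun s => ε * s ^ (ε - 1) * gAux (t + s) + s ^ ε * gd (t + s)) volume 0 a := by
    refine (II_aux1 hε (continuous_comp_add t continuous_gAux) 0 a).add ?_
    exact ((Real.continuous_rpow_const hε.le).mul
      (continuous_comp_add t continuous_gd)).intervalIntegrable _ _
  have h := intervalIntegral.integral_eq_sub_of_hasDeriv_right_of_le ha hcont hderiv hint
  have hadd := intervalIntegral.integral_add
    (II_aux1 hε (continuous_comp_add t continuous_gAux) 0 a)
    (((Real.continuous_rpow_const hε.le).mul
      (continuous_comp_add t continuous_gd)).intervalIntegrable 0 a)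
  simp only [Pi.mul_apply] at hadd; rw [hadd] at h
  rw [Real.zero_rpow hε.ne'] at h
  simp only [zero_mul, sub_zero] at h
  linarith [h]

/-- The derivative formula for `MAux`. -/
lemma deriv_MAux_eq {ε : ℝ} (hε : 0 < ε) (n : ℕ) (t : ℝ) :
    deriv (MAux ε n) t
      = ((Real.pi * n) ^ ε * gAux (t + Real.pi * n)
          - (Real.pi * n) ^ ε * gAux (t - Real.pi * n))
        + ∫ s in (0:ℝ)..(Real.pi * n), ε * s ^ (ε - 1) * (gAux (t - s) - gAux (t + s)) := by
  set a : ℝ := Real.pi * n with ha_def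
  have ha : 0 ≤ a := by positivity
  have habs : Continuous fun s : ℝ => |s| ^ ε :=
    continuous_abs.rpow_const (fun s => Or.inr hε.le)
  have hc1 : Continuous fun s : ℝ => |s| ^ ε * gd (t - s) :=
    habs.mul (continuous_comp_sub t continuous_gd)
  rw [(hasDerivAt_MAux hε n t).deriv]
  have hsplit : (∫ s in (-a)..(0:ℝ), |s| ^ ε * gd (t - s))
      + (∫ s in (0:ℝ)..a, |s| ^ ε * gd (t - s))
      = ∫ s in (-a)..a, |s| ^ ε * gd (t - s) :=
    intervalIntegral.integral_add_adjacent_intervals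
      (hc1.intervalIntegrable _ _) (hc1.intervalIntegrable _ _)
  rw [← hsplit]
  have hneg : (∫ s in (-a)..(0:ℝ), |s| ^ ε * gd (t - s))
      = ∫ s in (0:ℝ)..a, s ^ ε * gd (t + s) := by
    have e0 := intervalIntegral.integral_comp_neg (a := (0:ℝ)) (b := a)
      (f := fun s => |s| ^ ε * gd (t - s))
    rw [neg_zero] at e0
    rw [← e0]
    refine intervalIntegral.integral_congr fun s hs => ?_
    rw [Set.uIcc_of_le ha] at hs
    have hs0 : 0 ≤ s := hs.1
    rw [abs_neg, abs_of_nonneg hs0]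
    ring_nf
  have hpos : (∫ s in (0:ℝ)..a, |s| ^ ε * gd (t - s))
      = ∫ s in (0:ℝ)..a, s ^ ε * gd (t - s) := by
    refine intervalIntegral.integral_congr fun s hs => ?_
    rw [Set.uIcc_of_le ha] at hs
    rw [abs_of_nonneg hs.1]
  rw [hneg, hpos, ibp_neg hε ha t, ibp_pos hε ha t]
  have hfin : (∫ s in (0:ℝ)..a, ε * s ^ (ε - 1) * gAux (t - s))
      - (∫ s in (0:ℝ)..a, ε * s ^ (ε - 1) * gAux (t + s))
      = ∫ s in (0:ℝ)..a, ε * s ^ (ε - 1) * (gAux (t - s) - gAux (t + s)) := by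
    rw [← intervalIntegral.integral_sub
      (II_aux1 hε (continuous_comp_sub t continuous_gAux) 0 a)
      (II_aux1 hε (continuous_comp_add t continuous_gAux) 0 a)]
    refine intervalIntegral.integral_congr fun s _ => ?_
    ring
  linarith [hfin]

lemma rpow_mul_self {ε : ℝ} (hε : 0 < ε) (hε1 : ε < 1) {s : ℝ} (hs : 0 ≤ s) :
    s ^ (ε - 1) * s = s ^ ε := by
  rcases eq_or_lt_of_le hs with h | h
  · rw [← h, Real.zero_rpow hε.ne', Real.zero_rpow (by linarith : ε - 1 ≠ 0), mul_zero]
  · rw [← Real.rpow_add_one h.ne' (ε - 1), sub_add_cancel]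

lemma rpow_mul_inv_sq {ε : ℝ} {s : ℝ} (hs : 0 < s) :
    s ^ (ε - 1) * (s ^ 2)⁻¹ = s ^ (ε - 3) := by
  have h2 : (s:ℝ) ^ (2:ℕ) = s ^ (2:ℝ) := by
    rw [← Real.rpow_natCast s 2]; norm_num
  rw [h2, ← Real.rpow_neg hs.le, ← Real.rpow_add hs]
  congr 1; ring

lemma half_le_rpow {ε x : ℝ} (hε0 : 0 < ε) (hε1 : ε ≤ 1) (hx0 : 0 ≤ x) (hx1 : x ≤ 1) :
    1 / 2 ≤ (1 + x) ^ (ε - 1) := by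
  have h1 : (2:ℝ) ^ (ε - 1) ≤ (1 + x) ^ (ε - 1) :=
    Real.rpow_le_rpow_of_nonpos (by linarith) (by linarith) (by linarith)
  have h2 : (2:ℝ) ^ (-1:ℝ) ≤ (2:ℝ) ^ (ε - 1) :=
    Real.rpow_le_rpow_of_exponent_le one_le_two (by linarith)
  rw [Real.rpow_neg_one] at h2
  norm_num at h2
  linarith

set_option maxHeartbeats 2000000 in
/-- Main integral estimate. -/
lemma main_integral_bound {ε x a : ℝ} (hε : 0 < ε) (hε1 : ε < 1)
    (hx : 0 ≤ x) (ha2 : 2 ≤ a) (hxa : x < a / 2) :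
    (∫ s in (0:ℝ)..a, ε * s ^ (ε - 1) * |gAux (x - s) - gAux (x + s)|)
      ≤ 400 * (ε * (1 + x) ^ (ε - 1)) := by
  have hx1pos : (0:ℝ) < 1 + x := by linarith
  have hQnonneg : 0 ≤ ε * (1 + x) ^ (ε - 1) := by positivity
  have hcD : Continuous fun s : ℝ => |gAux (x - s) - gAux (x + s)| :=
    ((continuous_comp_sub x continuous_gAux).sub (continuous_comp_add x continuous_gAux)).abs
  have hII : ∀ c d : ℝ, IntervalIntegrable
      (fun s => ε * s ^ (ε - 1) * |gAux (x - s) - gAux (x + s)|) volume c d :=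
    fun c d => II_aux1 hε hcD c d
  have hsplit1 : (∫ s in (0:ℝ)..(x/2), ε * s ^ (ε - 1) * |gAux (x - s) - gAux (x + s)|)
      + (∫ s in (x/2)..(2*x), ε * s ^ (ε - 1) * |gAux (x - s) - gAux (x + s)|)
      = ∫ s in (0:ℝ)..(2*x), ε * s ^ (ε - 1) * |gAux (x - s) - gAux (x + s)| :=
    intervalIntegral.integral_add_adjacent_intervals (hII _ _) (hII _ _)
  have hsplit2 : (∫ s in (0:ℝ)..(2*x), ε * s ^ (ε - 1) * |gAux (x - s) - gAux (x + s)|)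
      + (∫ s in (2*x)..a, ε * s ^ (ε - 1) * |gAux (x - s) - gAux (x + s)|)
      = ∫ s in (0:ℝ)..a, ε * s ^ (ε - 1) * |gAux (x - s) - gAux (x + s)| :=
    intervalIntegral.integral_add_adjacent_intervals (hII _ _) (hII _ _)
  -- Region 1 : [0, x/2]
  have hE1 : (∫ s in (0:ℝ)..(x/2), ε * s ^ (ε - 1) * |gAux (x - s) - gAux (x + s)|)
      ≤ 96 * (ε * (1 + x) ^ (ε - 1)) := by
    have hIIg : IntervalIntegrable (fun s : ℝ => 96 * ε / (1 + x) ^ 2 * s ^ ε) volume 0 (x/2) :=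
      (intervalIntegral.intervalIntegrable_rpow' (by linarith)).const_mul _
    have hmono := intervalIntegral.integral_mono_on (by linarith : (0:ℝ) ≤ x/2)
      (hII 0 (x/2)) hIIg ?_
    · refine hmono.trans ?_
      rw [intervalIntegral.integral_const_mul, integral_rpow (Or.inl (by linarith))]
      rw [Real.zero_rpow (by linarith : ε + 1 ≠ 0)]
      have hA : (x/2) ^ (ε+1) ≤ (1+x) ^ (ε+1) :=
        Real.rpow_le_rpow (by linarith) (by linarith) (by linarith)
      have hB : ((x/2) ^ (ε+1) - 0) / (ε+1) ≤ (1+x) ^ (ε+1) := by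
        rw [sub_zero]
        calc (x/2) ^ (ε+1) / (ε+1) ≤ (x/2) ^ (ε+1) :=
              div_le_self (Real.rpow_nonneg (by linarith) _) (by linarith)
          _ ≤ (1+x) ^ (ε+1) := hA
      have hC : (1+x) ^ (ε+1) = (1+x) ^ (ε-1) * (1+x) ^ 2 := by
        rw [← Real.rpow_natCast (1+x) 2, ← Real.rpow_add hx1pos]
        congr 1
        push_cast; ring
      calc 96 * ε / (1 + x) ^ 2 * (((x/2) ^ (ε+1) - 0) / (ε+1))
          ≤ 96 * ε / (1 + x) ^ 2 * ((1+x) ^ (ε-1) * (1+x) ^ 2) := by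
            refine mul_le_mul_of_nonneg_left (hB.trans_eq hC) (by positivity)
        _ = 96 * (ε * (1+x) ^ (ε-1)) := by
            field_simp
    · intro s hs
      obtain ⟨hs0, hs2⟩ := hs
      have hD := D1 hx hs0 hs2
      have hr : 0 ≤ ε * s ^ (ε - 1) := by
        have := Real.rpow_nonneg hs0 (ε - 1); positivity
      calc ε * s ^ (ε - 1) * |gAux (x - s) - gAux (x + s)|
          ≤ ε * s ^ (ε - 1) * (96 * s / (1 + x) ^ 2) := mul_le_mul_of_nonneg_left hD hr
        _ = 96 * ε / (1 + x) ^ 2 * (s ^ (ε - 1) * s) := by ring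
        _ = 96 * ε / (1 + x) ^ 2 * s ^ ε := by rw [rpow_mul_self hε hε1 hs0]
  -- Region 2 : [x/2, 2x]
  have hE2 : (∫ s in (x/2)..(2*x), ε * s ^ (ε - 1) * |gAux (x - s) - gAux (x + s)|)
      ≤ 64 * (ε * (1 + x) ^ (ε - 1)) := by
    rcases le_or_gt x 1 with hx1 | hx1
    · -- small x
      have hIIg : IntervalIntegrable (fun s : ℝ => ε * x / 4 * s ^ ε) volume (x/2) (2*x) :=
        (intervalIntegral.intervalIntegrable_rpow' (by linarith)).const_mul _
      have hmono := intervalIntegral.integral_mono_on (by linarith : x/2 ≤ 2*x)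
        (hII _ _) hIIg ?_
      · refine hmono.trans ?_
        rw [intervalIntegral.integral_const_mul, integral_rpow (Or.inl (by linarith))]
        have h2x : (2*x) ^ (ε+1) ≤ 4 * x := by
          rcases eq_or_lt_of_le hx with h0 | h0
          · rw [← h0]
            norm_num
            rw [Real.zero_rpow (by linarith : ε + 1 ≠ 0)]
          · have e1 : (2*x) ^ (ε+1) = (2*x) ^ ε * (2*x) := by
              rw [Real.rpow_add_one (by positivity : (2*x) ≠ 0)]
            have e2 : (2*x) ^ ε ≤ 2 := by
              calc (2*x) ^ ε ≤ (2:ℝ) ^ ε :=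
                    Real.rpow_le_rpow (by positivity) (by linarith) hε.le
                _ ≤ (2:ℝ) ^ (1:ℝ) :=
                    Real.rpow_le_rpow_of_exponent_le one_le_two hε1.le
                _ = 2 := Real.rpow_one 2
            rw [e1]
            nlinarith [Real.rpow_nonneg (by positivity : (0:ℝ) ≤ 2*x) ε]
        have hnn : (0:ℝ) ≤ (x/2) ^ (ε+1) := Real.rpow_nonneg (by linarith) _
        have hhalf := half_le_rpow hε hε1.le hx hx1
        have hstep : ε * x / 4 * (((2*x) ^ (ε+1) - (x/2) ^ (ε+1)) / (ε+1)) ≤ ε := by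
          have hmono2 : (x/2) ^ (ε+1) ≤ (2*x) ^ (ε+1) :=
            Real.rpow_le_rpow (by linarith) (by linarith) (by linarith)
          have h1 : ((2*x) ^ (ε+1) - (x/2) ^ (ε+1)) / (ε+1) ≤ 4 * x := by
            calc ((2*x) ^ (ε+1) - (x/2) ^ (ε+1)) / (ε+1)
                ≤ (2*x) ^ (ε+1) - (x/2) ^ (ε+1) :=
                  div_le_self (by linarith) (by linarith)
              _ ≤ 4 * x := by linarith [h2x, hnn]
          have h2 : 0 ≤ ε * x / 4 := by positivity
          calc ε * x / 4 * (((2*x) ^ (ε+1) - (x/2) ^ (ε+1)) / (ε+1))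
              ≤ ε * x / 4 * (4 * x) := mul_le_mul_of_nonneg_left h1 h2
            _ = ε * x ^ 2 := by ring
            _ ≤ ε := by nlinarith
        refine hstep.trans ?_
        nlinarith
      · intro s hs
        obtain ⟨hs0, hs2⟩ := hs
        have hs0' : 0 ≤ s := by linarith
        have hD := D2' hx hs0' (by linarith)
        have hr : 0 ≤ ε * s ^ (ε - 1) := by
          have := Real.rpow_nonneg hs0' (ε - 1); positivity
        calc ε * s ^ (ε - 1) * |gAux (x - s) - gAux (x + s)|
            ≤ ε * s ^ (ε - 1) * (x * s / 4) := mul_le_mul_of_nonneg_left hD hr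
          _ = ε * x / 4 * (s ^ (ε - 1) * s) := by ring
          _ = ε * x / 4 * s ^ ε := by rw [rpow_mul_self hε hε1 hs0']
    · -- large x
      have hxhalf : (0:ℝ) < x / 2 := by linarith
      have hcinv : Continuous fun s : ℝ => (1 + (s - x) ^ 2)⁻¹ := by
        refine Continuous.inv₀ (by fun_prop) fun s => by positivity
      have hIIg : IntervalIntegrable
          (fun s : ℝ => 4 * ε * (x/2) ^ (ε-1) * (1 + (s - x) ^ 2)⁻¹) volume (x/2) (2*x) :=
        (continuous_const.mul hcinv).intervalIntegrable _ _
      have hmono := intervalIntegral.integral_mono_on (by linarith : x/2 ≤ 2*x)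
        (hII _ _) hIIg ?_
      · refine hmono.trans ?_
        rw [intervalIntegral.integral_const_mul]
        have hI : (∫ s in (x/2)..(2*x), (1 + (s - x) ^ 2)⁻¹)
            = Real.arctan x - Real.arctan (-(x/2)) := by
          have hcs := intervalIntegral.integral_comp_sub_right (a := x/2) (b := 2*x)
            (fun u : ℝ => (1 + u ^ 2)⁻¹) x
          rw [show x/2 - x = -(x/2) by ring, show 2*x - x = x by ring] at hcs
          rw [hcs]
          exact integral_inv_one_add_sq
        rw [hI]
        have harc : Real.arctan x - Real.arctan (-(x/2)) ≤ Real.pi := by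
          have h1 := Real.arctan_lt_pi_div_two x
          have h2 := Real.neg_pi_div_two_lt_arctan (-(x/2))
          linarith
        have hxr : (x/2) ^ (ε-1) ≤ 4 * (1+x) ^ (ε-1) := by
          have h1 : (x/2) ^ (ε-1) ≤ ((1+x)/4) ^ (ε-1) :=
            Real.rpow_le_rpow_of_nonpos (by positivity) (by linarith) (by linarith)
          have h2 : ((1+x)/4) ^ (ε-1) = (1+x) ^ (ε-1) / (4:ℝ) ^ (ε-1) :=
            Real.div_rpow (by linarith) (by norm_num) _
          have h3 : (1/4 : ℝ) ≤ (4:ℝ) ^ (ε-1) := by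
            have h4 : (4:ℝ) ^ (-1:ℝ) ≤ (4:ℝ) ^ (ε-1) :=
              Real.rpow_le_rpow_of_exponent_le (by norm_num) (by linarith)
            rw [Real.rpow_neg_one] at h4
            norm_num at h4
            linarith
          have h5 : (1+x) ^ (ε-1) / (4:ℝ) ^ (ε-1) ≤ (1+x) ^ (ε-1) / (1/4) := by
            apply div_le_div_of_nonneg_left (Real.rpow_nonneg (by linarith) _) (by norm_num) h3
          rw [h2] at h1
          have h6 : (1+x) ^ (ε-1) / (1/4 : ℝ) = 4 * (1+x) ^ (ε-1) := by ring
          exact h1.trans (h5.trans_eq h6)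
        calc 4 * ε * (x/2) ^ (ε-1) * (Real.arctan x - Real.arctan (-(x/2)))
            ≤ 4 * ε * (4 * (1+x) ^ (ε-1)) * Real.pi := by
              have hp1 : 0 ≤ 4 * ε * (x/2) ^ (ε-1) := by
                have := Real.rpow_nonneg hxhalf.le (ε-1); positivity
              have hp2 : 0 ≤ (4:ℝ) * ε := by positivity
              have hstep1 : 4 * ε * (x/2) ^ (ε-1) * (Real.arctan x - Real.arctan (-(x/2)))
                  ≤ 4 * ε * (x/2) ^ (ε-1) * Real.pi := mul_le_mul_of_nonneg_left harc hp1
              have hstep2 : 4 * ε * (x/2) ^ (ε-1) * Real.pi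
                  ≤ 4 * ε * (4 * (1+x) ^ (ε-1)) * Real.pi := by
                have hpi : 0 ≤ Real.pi := Real.pi_pos.le
                have := mul_le_mul_of_nonneg_left hxr hp2
                nlinarith
              linarith
          _ ≤ 64 * (ε * (1+x) ^ (ε-1)) := by
              have hpi4 := Real.pi_le_four
              have hnn2 : 0 ≤ ε * (1+x) ^ (ε-1) := by positivity
              nlinarith
      · intro s hs
        obtain ⟨hs0, hs2⟩ := hs
        have hs0' : 0 ≤ s := by linarith
        have hD := D3 hx hs0'
        have hr : 0 ≤ ε * s ^ (ε - 1) := by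
          have := Real.rpow_nonneg hs0' (ε - 1); positivity
        have hsr : s ^ (ε-1) ≤ (x/2) ^ (ε-1) :=
          Real.rpow_le_rpow_of_nonpos hxhalf hs0 (by linarith)
        have hinv : (0:ℝ) < (1 + (s - x) ^ 2)⁻¹ := by positivity
        calc ε * s ^ (ε - 1) * |gAux (x - s) - gAux (x + s)|
            ≤ ε * s ^ (ε - 1) * (4 / (1 + (s - x) ^ 2)) := mul_le_mul_of_nonneg_left hD hr
          _ = 4 * ε * s ^ (ε-1) * (1 + (s - x) ^ 2)⁻¹ := by
              rw [div_eq_mul_inv]; ring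
          _ ≤ 4 * ε * (x/2) ^ (ε-1) * (1 + (s - x) ^ 2)⁻¹ := by
              have h6 : 4 * ε * s ^ (ε-1) ≤ 4 * ε * (x/2) ^ (ε-1) := by
                have : (0:ℝ) ≤ 4 * ε := by positivity
                exact mul_le_mul_of_nonneg_left hsr this
              exact mul_le_mul_of_nonneg_right h6 hinv.le
  -- Region 3 : [2x, a]
  have hE3 : (∫ s in (2*x)..a, ε * s ^ (ε - 1) * |gAux (x - s) - gAux (x + s)|)
      ≤ 240 * (ε * (1 + x) ^ (ε - 1)) := by
    have h2xa : 2*x ≤ a := by linarith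
    rcases le_or_gt x 1 with hx1 | hx1
    · -- x ≤ 1 : split at 2
      have h2x2 : 2*x ≤ 2 := by linarith
      have hsplit3 : (∫ s in (2*x)..(2:ℝ), ε * s ^ (ε - 1) * |gAux (x - s) - gAux (x + s)|)
          + (∫ s in (2:ℝ)..a, ε * s ^ (ε - 1) * |gAux (x - s) - gAux (x + s)|)
          = ∫ s in (2*x)..a, ε * s ^ (ε - 1) * |gAux (x - s) - gAux (x + s)| :=
        intervalIntegral.integral_add_adjacent_intervals (hII _ _) (hII _ _)
      have hA : (∫ s in (2*x)..(2:ℝ), ε * s ^ (ε - 1) * |gAux (x - s) - gAux (x + s)|)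
          ≤ 96 * (x * ε) := by
        have hIIg : IntervalIntegrable (fun s : ℝ => 24*x*ε * s ^ ε) volume (2*x) 2 :=
          (intervalIntegral.intervalIntegrable_rpow' (by linarith)).const_mul _
        have hmono := intervalIntegral.integral_mono_on h2x2 (hII _ _) hIIg ?_
        · refine hmono.trans ?_
          rw [intervalIntegral.integral_const_mul]
          have hae : (0 : ℝ → ℝ) ≤ᵐ[volume.restrict (Set.Ioc (0:ℝ) 2)] fun s => s ^ ε := by
            refine (ae_restrict_iff' measurableSet_Ioc).2 (Filter.Eventually.of_forall
              fun s hs => ?_)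
            simpa using Real.rpow_nonneg hs.1.le ε
          have hmono2 : (∫ s in (2*x)..(2:ℝ), s ^ ε) ≤ ∫ s in (0:ℝ)..2, s ^ ε :=
            intervalIntegral.integral_mono_interval (by linarith) h2x2 le_rfl hae
              (intervalIntegral.intervalIntegrable_rpow' (by linarith))
          have heval : (∫ s in (0:ℝ)..2, s ^ ε) = ((2:ℝ) ^ (ε+1) - (0:ℝ) ^ (ε+1))/(ε+1) :=
            integral_rpow (Or.inl (by linarith))
          have hle4 : (2:ℝ) ^ (ε+1) ≤ 4 := by
            calc (2:ℝ) ^ (ε+1) ≤ (2:ℝ) ^ (2:ℝ) :=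
                  Real.rpow_le_rpow_of_exponent_le one_le_two (by linarith)
              _ = 4 := by
                  rw [show (2:ℝ) = ((2:ℕ):ℝ) from by norm_num]
                  rw [Real.rpow_natCast]
                  norm_num
          have hint4 : (∫ s in (2*x)..(2:ℝ), s ^ ε) ≤ 4 := by
            refine hmono2.trans ?_
            rw [heval, Real.zero_rpow (by linarith : ε + 1 ≠ 0)]
            calc ((2:ℝ) ^ (ε+1) - 0)/(ε+1) ≤ (2:ℝ) ^ (ε+1) := by
                  rw [sub_zero]
                  exact div_le_self (Real.rpow_nonneg (by norm_num) _) (by linarith)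
              _ ≤ 4 := hle4
          calc 24*x*ε * ∫ s in (2*x)..(2:ℝ), s ^ ε ≤ 24*x*ε * 4 := by
                refine mul_le_mul_of_nonneg_left hint4 (by positivity)
            _ = 96 * (x * ε) := by ring
        · intro s hs
          obtain ⟨hs1, hs2⟩ := hs
          have hs0 : 0 ≤ s := by linarith
          have hD := (D2 hx hs1).trans
            (mul_le_mul_of_nonneg_left (min_le_left _ _) (by positivity))
          have hr : 0 ≤ ε * s ^ (ε - 1) := by
            have := Real.rpow_nonneg hs0 (ε - 1); positivity
          calc ε * s ^ (ε - 1) * |gAux (x - s) - gAux (x + s)|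
              ≤ ε * s ^ (ε - 1) * (24 * x * s) := mul_le_mul_of_nonneg_left hD hr
            _ = 24*x*ε * (s ^ (ε - 1) * s) := by ring
            _ = 24*x*ε * s ^ ε := by rw [rpow_mul_self hε hε1 hs0]
      have hB : (∫ s in (2:ℝ)..a, ε * s ^ (ε - 1) * |gAux (x - s) - gAux (x + s)|)
          ≤ 24 * (x * ε) := by
        have hnotmem : (0:ℝ) ∉ Set.uIcc (2:ℝ) a := by
          rw [Set.uIcc_of_le (by linarith)]
          intro hmem
          exact absurd hmem.1 (by norm_num)
        have hIIg : IntervalIntegrable (fun s : ℝ => 24*x*ε * s ^ (ε-3)) volume 2 a :=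
          (intervalIntegral.intervalIntegrable_rpow (Or.inr hnotmem)).const_mul _
        have hmono := intervalIntegral.integral_mono_on (by linarith : (2:ℝ) ≤ a)
          (hII _ _) hIIg ?_
        · refine hmono.trans ?_
          rw [intervalIntegral.integral_const_mul]
          have heval : (∫ s in (2:ℝ)..a, s ^ (ε-3))
              = (a ^ (ε-2) - (2:ℝ) ^ (ε-2))/(ε-2) := by
            rw [integral_rpow (Or.inr ⟨by linarith, hnotmem⟩)]
            rw [show ε - 3 + 1 = ε - 2 from by ring]
          have hkey : (a ^ (ε-2) - (2:ℝ) ^ (ε-2))/(ε-2) ≤ 1 := by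
            have hba : a ^ (ε-2) ≤ (2:ℝ) ^ (ε-2) :=
              Real.rpow_le_rpow_of_nonpos two_pos (by linarith) (by linarith)
            have h2le1 : (2:ℝ) ^ (ε-2) ≤ 1 :=
              Real.rpow_le_one_of_one_le_of_nonpos one_le_two (by linarith)
            have e : (a ^ (ε-2) - (2:ℝ) ^ (ε-2))/(ε-2)
                = ((2:ℝ) ^ (ε-2) - a ^ (ε-2))/(2-ε) := by
              rw [div_eq_div_iff (by linarith) (by linarith)]
              ring
            rw [e]
            calc ((2:ℝ) ^ (ε-2) - a ^ (ε-2))/(2-ε) ≤ (2:ℝ) ^ (ε-2) - a ^ (ε-2) :=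
                  div_le_self (by linarith) (by linarith)
              _ ≤ 1 := by
                  linarith [Real.rpow_nonneg (by linarith : (0:ℝ) ≤ a) (ε-2)]
          calc 24*x*ε * ∫ s in (2:ℝ)..a, s ^ (ε-3)
              ≤ 24*x*ε * 1 := by
                rw [heval]
                exact mul_le_mul_of_nonneg_left hkey (by positivity)
            _ = 24 * (x * ε) := by ring
        · intro s hs
          obtain ⟨hs1, hs2⟩ := hs
          have hspos : 0 < s := by linarith
          have hD := (D2 hx (by linarith : 2*x ≤ s)).trans
            (mul_le_mul_of_nonneg_left (min_le_right _ _) (by positivity))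
          have hr : 0 ≤ ε * s ^ (ε - 1) := by
            have := Real.rpow_nonneg hspos.le (ε - 1); positivity
          calc ε * s ^ (ε - 1) * |gAux (x - s) - gAux (x + s)|
              ≤ ε * s ^ (ε - 1) * (24 * x * (s^2)⁻¹) := mul_le_mul_of_nonneg_left hD hr
            _ = 24*x*ε * (s ^ (ε - 1) * (s^2)⁻¹) := by ring
            _ = 24*x*ε * s ^ (ε-3) := by rw [rpow_mul_inv_sq hspos]
      have hhalf := half_le_rpow hε hε1.le hx hx1
      have hfin : (96:ℝ) * (x*ε) + 24 * (x*ε) ≤ 240 * (ε * (1 + x) ^ (ε - 1)) := by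
        have h1 : x * ε ≤ ε := by nlinarith
        nlinarith
      linarith [hsplit3 ▸ add_le_add hA hB]
    · -- x > 1
      have hxpos : (0:ℝ) < x := by linarith
      have h2xpos : (0:ℝ) < 2*x := by linarith
      have hnotmem : (0:ℝ) ∉ Set.uIcc (2*x) a := by
        rw [Set.uIcc_of_le h2xa]
        intro hmem
        linarith [hmem.1]
      have hIIg : IntervalIntegrable (fun s : ℝ => 24*x*ε * s ^ (ε-3)) volume (2*x) a :=
        (intervalIntegral.intervalIntegrable_rpow (Or.inr hnotmem)).const_mul _
      have hmono := intervalIntegral.integral_mono_on h2xa (hII _ _) hIIg ?_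
      · refine hmono.trans ?_
        rw [intervalIntegral.integral_const_mul]
        have heval : (∫ s in (2*x)..a, s ^ (ε-3))
            = (a ^ (ε-2) - (2*x) ^ (ε-2))/(ε-2) := by
          rw [integral_rpow (Or.inr ⟨by linarith, hnotmem⟩)]
          rw [show ε - 3 + 1 = ε - 2 from by ring]
        have hkey : (a ^ (ε-2) - (2*x) ^ (ε-2))/(ε-2) ≤ (2*x) ^ (ε-2) := by
          have hba : a ^ (ε-2) ≤ (2*x) ^ (ε-2) :=
            Real.rpow_le_rpow_of_nonpos h2xpos h2xa (by linarith)
          have e : (a ^ (ε-2) - (2*x) ^ (ε-2))/(ε-2)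
              = ((2*x) ^ (ε-2) - a ^ (ε-2))/(2-ε) := by
            rw [div_eq_div_iff (by linarith) (by linarith)]
            ring
          rw [e]
          calc ((2*x) ^ (ε-2) - a ^ (ε-2))/(2-ε) ≤ (2*x) ^ (ε-2) - a ^ (ε-2) :=
                div_le_self (by linarith) (by linarith)
            _ ≤ (2*x) ^ (ε-2) := by
                linarith [Real.rpow_nonneg (by linarith : (0:ℝ) ≤ a) (ε-2)]
        have hsub : x * (2*x) ^ (ε-2) = (2*x) ^ (ε-1) / 2 := by
          rw [show ε - 2 = ε - 1 - 1 from by ring,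
            Real.rpow_sub_one (by positivity : (2*x) ≠ 0)]
          field_simp
        have h2x1x : (2*x) ^ (ε-1) ≤ (1+x) ^ (ε-1) :=
          Real.rpow_le_rpow_of_nonpos (by linarith) (by linarith) (by linarith)
        calc 24*x*ε * ∫ s in (2*x)..a, s ^ (ε-3)
            ≤ 24*x*ε * (2*x) ^ (ε-2) := by
              rw [heval]
              exact mul_le_mul_of_nonneg_left hkey (by positivity)
          _ = 24*ε * (x * (2*x) ^ (ε-2)) := by ring
          _ = 12*ε * (2*x) ^ (ε-1) := by rw [hsub]; ring
          _ ≤ 12*ε * (1+x) ^ (ε-1) := by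
              exact mul_le_mul_of_nonneg_left h2x1x (by positivity)
          _ ≤ 240 * (ε * (1 + x) ^ (ε - 1)) := by
              have := Real.rpow_nonneg (by linarith : (0:ℝ) ≤ 1+x) (ε-1)
              nlinarith
      · intro s hs
        obtain ⟨hs1, hs2⟩ := hs
        have hspos : 0 < s := by linarith
        have hD := (D2 hx hs1).trans
          (mul_le_mul_of_nonneg_left (min_le_right _ _) (by positivity))
        have hr : 0 ≤ ε * s ^ (ε - 1) := by
          have := Real.rpow_nonneg hspos.le (ε - 1); positivity
        calc ε * s ^ (ε - 1) * |gAux (x - s) - gAux (x + s)|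
            ≤ ε * s ^ (ε - 1) * (24 * x * (s^2)⁻¹) := mul_le_mul_of_nonneg_left hD hr
          _ = 24*x*ε * (s ^ (ε - 1) * (s^2)⁻¹) := by ring
          _ = 24*x*ε * s ^ (ε-3) := by rw [rpow_mul_inv_sq hspos]
  have htotal := hsplit2 ▸ (hsplit1 ▸ (add_le_add (add_le_add hE1 hE2) hE3))
  calc (∫ s in (0:ℝ)..a, ε * s ^ (ε - 1) * |gAux (x - s) - gAux (x + s)|)
      ≤ 96 * (ε * (1 + x) ^ (ε - 1)) + 64 * (ε * (1 + x) ^ (ε - 1))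
        + 240 * (ε * (1 + x) ^ (ε - 1)) := htotal
    _ = 400 * (ε * (1 + x) ^ (ε - 1)) := by ring

lemma boundary_bound {ε : ℝ} (hε : 0 < ε) (hε1 : ε < 1) {n : ℕ} (hn : 1 ≤ n) {t : ℝ}
    (ht : |t| < Real.pi * n / 2) :
    |(Real.pi * n) ^ ε * gAux (t + Real.pi * n) - (Real.pi * n) ^ ε * gAux (t - Real.pi * n)|
      ≤ 8 * (n:ℝ) ^ (ε - 2) := by
  set a : ℝ := Real.pi * n with ha_def
  have hn1 : (1:ℝ) ≤ n := by exact_mod_cast hn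
  have hπ := Real.pi_gt_three
  have ha3 : 3 ≤ a := by
    rw [ha_def]; nlinarith
  have hapos : (0:ℝ) < a := by linarith
  have habs := abs_lt.1 ht
  have hae : 0 ≤ a ^ ε := Real.rpow_nonneg hapos.le ε
  have h1 : gAux (t + a) ≤ 4 / a ^ 2 := by
    have hpos : 0 < t + a := by linarith [habs.1]
    refine (gAux_le_inv_sq _ hpos.ne').trans ?_
    rw [div_le_div_iff₀ (by nlinarith : (0:ℝ) < (t + a) ^ 2) (by positivity)]
    nlinarith [habs.1, habs.2]
  have h2 : gAux (t - a) ≤ 4 / a ^ 2 := by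
    have hneg : t - a < 0 := by linarith [habs.2]
    refine (gAux_le_inv_sq _ hneg.ne).trans ?_
    rw [div_le_div_iff₀ (by nlinarith : (0:ℝ) < (t - a) ^ 2) (by positivity)]
    nlinarith [habs.1, habs.2]
  have hg1 := gAux_nonneg (t + a)
  have hg2 := gAux_nonneg (t - a)
  have k1 : a ^ ε * gAux (t + a) ≤ a ^ ε * (4 / a ^ 2) := mul_le_mul_of_nonneg_left h1 hae
  have k2 : a ^ ε * gAux (t - a) ≤ a ^ ε * (4 / a ^ 2) := mul_le_mul_of_nonneg_left h2 hae
  have k3 : 0 ≤ a ^ ε * gAux (t + a) := mul_nonneg hae hg1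
  have k4 : 0 ≤ a ^ ε * gAux (t - a) := mul_nonneg hae hg2
  have e : a ^ ε * (4 / a ^ 2) = 4 * (a ^ ε / a ^ 2) := by ring
  have h3 : |a ^ ε * gAux (t + a) - a ^ ε * gAux (t - a)| ≤ 8 * (a ^ ε / a ^ 2) := by
    rw [e] at k1 k2
    rw [abs_le]
    constructor <;> linarith
  have h4 : a ^ ε / a ^ 2 = a ^ (ε - 2) := by
    have e2 : a ^ (2:ℝ) = a ^ (2:ℕ) := by
      rw [← Real.rpow_natCast a 2]; norm_num
    rw [Real.rpow_sub hapos, e2]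
  have h5 : a ^ (ε - 2) ≤ (n:ℝ) ^ (ε - 2) := by
    refine Real.rpow_le_rpow_of_nonpos (by linarith) ?_ (by linarith)
    rw [ha_def]; nlinarith
  calc |a ^ ε * gAux (t + a) - a ^ ε * gAux (t - a)| ≤ 8 * (a ^ ε / a ^ 2) := h3
    _ = 8 * a ^ (ε - 2) := by rw [h4]
    _ ≤ 8 * (n:ℝ) ^ (ε - 2) := by linarith

end MAuxProof

/-- There is an absolute constant `C > 0` such that for every `ε ∈ (0,1)`, `n ≥ 1` and
`|t| < πn/2`, `|M_n'(t)| ≤ C (n^{ε-2} + ε (1 + |t|)^{ε-1})`. -/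
theorem MAux_deriv_bound :
    ∃ C : ℝ, 0 < C ∧
      ∀ ε : ℝ, ε ∈ Set.Ioo (0 : ℝ) 1 →
        ∀ n : ℕ, 1 ≤ n →
          ∀ t : ℝ, |t| < Real.pi * n / 2 →
            |deriv (MAux ε n) t| ≤ C * ((n : ℝ) ^ (ε - 2) + ε * (1 + |t|) ^ (ε - 1)) := by
  refine ⟨408, by norm_num, ?_⟩
  rintro ε ⟨hε0, hε1⟩ n hn t ht
  have hn1 : (1:ℝ) ≤ n := by exact_mod_cast hn
  have hπ := Real.pi_gt_three
  have ha3 : (3:ℝ) ≤ Real.pi * n := by nlinarith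
  have hx0 : (0:ℝ) ≤ |t| := abs_nonneg t
  rw [MAuxProof.deriv_MAux_eq hε0 n t]
  have hb1 := MAuxProof.boundary_bound hε0 hε1 hn ht
  have hb2 : |∫ s in (0:ℝ)..(Real.pi * n), ε * s ^ (ε - 1) * (gAux (t - s) - gAux (t + s))|
      ≤ 400 * (ε * (1 + |t|) ^ (ε - 1)) := by
    refine (intervalIntegral.abs_integral_le_integral_abs (by linarith)).trans ?_
    have hcongr : (∫ s in (0:ℝ)..(Real.pi * n),
          |ε * s ^ (ε - 1) * (gAux (t - s) - gAux (t + s))|)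
        = ∫ s in (0:ℝ)..(Real.pi * n),
            ε * s ^ (ε - 1) * |gAux (|t| - s) - gAux (|t| + s)| := by
      refine intervalIntegral.integral_congr fun s hs => ?_
      rw [Set.uIcc_of_le (by linarith)] at hs
      rw [abs_mul, abs_mul, abs_of_nonneg hε0.le,
        abs_of_nonneg (Real.rpow_nonneg hs.1 (ε - 1)), MAuxProof.abs_D_eq t s]
    rw [hcongr]
    exact MAuxProof.main_integral_bound hε0 hε1 hx0 (by linarith) ht
  have hnn1 : (0:ℝ) ≤ (n:ℝ) ^ (ε - 2) := Real.rpow_nonneg (by linarith) _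
  have hnn2 : (0:ℝ) ≤ ε * (1 + |t|) ^ (ε - 1) := by
    have := Real.rpow_nonneg (by linarith : (0:ℝ) ≤ 1 + |t|) (ε - 1)
    positivity
  calc |((Real.pi * n) ^ ε * gAux (t + Real.pi * n)
          - (Real.pi * n) ^ ε * gAux (t - Real.pi * n))
        + ∫ s in (0:ℝ)..(Real.pi * n), ε * s ^ (ε - 1) * (gAux (t - s) - gAux (t + s))|
      ≤ |(Real.pi * n) ^ ε * gAux (t + Real.pi * n)
          - (Real.pi * n) ^ ε * gAux (t - Real.pi * n)|
        + |∫ s in (0:ℝ)..(Real.pi * n), ε * s ^ (ε - 1) * (gAux (t - s) - gAux (t + s))| :=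
        abs_add_le _ _
    _ ≤ 8 * (n:ℝ) ^ (ε - 2) + 400 * (ε * (1 + |t|) ^ (ε - 1)) := add_le_add hb1 hb2
    _ ≤ 408 * ((n : ℝ) ^ (ε - 2) + ε * (1 + |t|) ^ (ε - 1)) := by nlinarith
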